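/- Let $(Q_n, \star)$ be a quandle and let $\rhd$ be the construction-1 operation on $Q_n \times \mathbb{Z}_3$. Then $(Q_n \times \mathbb{Z}_3, \rhd)$ is connected (i.e. for every $A, B \in Q_n \times \mathbb{Z}_3$ there exist finitely many elements $X_1, \dots, X_k \in Q_n \times \mathbb{Z}_3$ with $B = X_1 \rhd (X_2 \rhd (\cdots (X_k \rhd A)))$) if and only if $(Q_n, \star)$ is connected (i.e. for every $a, b \in Q_n$ there exist $x_1, \dots, x_k \in Q_n$ with $b = x_1 \star (x_2 \star (\cdots (x_k \star a)))$). -/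
import Mathlib


/-- The construction-1 operation on `Q × ZMod 3`. -/
def op1 {Q : Type*} (star : Q → Q → Q) (X Y : Q × ZMod 3) : Q × ZMod 3 :=
  if (X.2 = 1 ∧ Y.2 = 1) ∨ (X.2 = 0 ∧ Y.2 = 1) then (star X.1 Y.1, X.2 + Y.2 + 2)
  else if (X.2 = 2 ∧ Y.2 = 2) ∨ (X.2 = 2 ∧ Y.2 = 1) then (star X.1 Y.1, X.2)
  else (star X.1 Y.1, X.2 + Y.2)

/-- A quandle structure: idempotent, right translations bijective, right self-distributive. -/
def IsQuandle {Q : Type*} (star : Q → Q → Q) : Prop :=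
  (∀ x, star x x = x) ∧
  (∀ x y, ∃! z, star z y = x) ∧
  (∀ x y z, star (star x y) z = star (star x z) (star y z))

/-- Connectedness: every `b` is reachable from every `a` by finitely many left
translations `b = x₁ ⋆ (x₂ ⋆ (⋯ (xₖ ⋆ a)))`. -/
def QuandleConnected {Q : Type*} (star : Q → Q → Q) : Prop :=
  ∀ a b : Q, ∃ l : List Q, l ≠ [] ∧ b = l.foldr star a

/-- The second-coordinate dynamics of `op1`. -/
def g2 (a b : ZMod 3) : ZMod 3 :=
  if (a = 1 ∧ b = 1) ∨ (a = 0 ∧ b = 1) then a + b + 2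
  else if (a = 2 ∧ b = 2) ∨ (a = 2 ∧ b = 1) then a
  else a + b

lemma op1_fst {Q : Type*} (star : Q → Q → Q) (X Y : Q × ZMod 3) :
    (op1 star X Y).1 = star X.1 Y.1 := by
  unfold op1; split_ifs <;> rfl

lemma op1_snd {Q : Type*} (star : Q → Q → Q) (X Y : Q × ZMod 3) :
    (op1 star X Y).2 = g2 X.2 Y.2 := by
  unfold op1 g2; split_ifs <;> rfl

lemma g2_key : ∀ m β : ZMod 3, g2 β (g2 1 m) = β := by decide

lemma fst_foldr {Q : Type*} (star : Q → Q → Q) (L : List (Q × ZMod 3)) (A : Q × ZMod 3) :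
    (L.foldr (op1 star) A).1 = (L.map Prod.fst).foldr star A.1 := by
  induction L with
  | nil => rfl
  | cons X T ih => simp [List.foldr_cons, op1_fst, ih]

theorem construction1_connected_iff {Q : Type*} (star : Q → Q → Q)
    (hq : IsQuandle star) :
    QuandleConnected (op1 star) ↔ QuandleConnected star := by
  constructor
  · intro hc a b
    obtain ⟨L, hne, hEq⟩ := hc (a, 0) (b, 0)
    refine ⟨L.map Prod.fst, by simpa using hne, ?_⟩
    have := congrArg Prod.fst hEq
    rwa [fst_foldr] at this
  · intro hs A B
    obtain ⟨l, hne, hEq⟩ := hs A.1 B.1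
    refine ⟨(B.1, B.2) :: (B.1, 1) :: l.map (fun x => (x, (0 : ZMod 3))), by simp, ?_⟩
    set M := (l.map (fun x => (x, (0 : ZMod 3)))).foldr (op1 star) A with hM
    have hM1 : M.1 = B.1 := by
      rw [hM, fst_foldr]
      simp only [List.map_map]
      have : (Prod.fst ∘ fun x => (x, (0 : ZMod 3))) = (id : Q → Q) := rfl
      rw [this, List.map_id]
      exact hEq.symm
    simp only [List.foldr_cons]
    have h1 : op1 star (B.1, 1) M = (B.1, g2 1 M.2) := by
      apply Prod.ext
      · rw [op1_fst]; simp [hM1, hq.1]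
      · rw [op1_snd]
    rw [h1]
    apply Prod.ext
    · rw [op1_fst]; simp [hq.1]
    · rw [op1_snd]; simp [g2_key]
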